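/- arXiv:2209.14310 — 5 statements merged into one kernel-verified Lean document; each statement's English description precedes it below -/
import Mathlib

section
/- Let A be a Hermitian operator on a 2N-dimensional complex Hilbert space and T an antiunitary involution (T² = 1) that anticommutes with A. Then there exists an orthonormal basis of the form φ₁, Tφ₁, ..., φ_N, Tφ_N where each φᵢ is an eigenvector of A with eigenvalue aᵢ and Tφᵢ is an eigenvector of A with eigenvalue −aᵢ. -/
open scoped InnerProductSpace

universe u

lemma exists_good {V : Type*} [NormedAddCommGroup V] [InnerProductSpace ℂ V]
    [FiniteDimensional ℂ V] (hdim : 2 ≤ Module.finrank ℂ V)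
    (A : V →ₗ[ℂ] V) (hA : ∀ x y : V, ⟪A x, y⟫_ℂ = ⟪x, A y⟫_ℂ)
    (T : V → V)
    (hT_add : ∀ x y : V, T (x + y) = T x + T y)
    (hT_smul : ∀ (c : ℂ) (x : V), T (c • x) = (starRingEnd ℂ) c • T x)
    (hT_inner : ∀ x y : V, ⟪T x, T y⟫_ℂ = ⟪y, x⟫_ℂ)
    (hT_inv : ∀ x : V, T (T x) = x)
    (hTA : ∀ x : V, T (A x) = - A (T x)) :
    ∃ (φ : V) (a : ℝ), ⟪φ, φ⟫_ℂ = 1 ∧ A φ = (a : ℂ) • φ ∧ ⟪φ, T φ⟫_ℂ = 0 := by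
  have hnt : Nontrivial V := by
    rw [← Module.finrank_pos_iff (R := ℂ)]; omega
  have hAsymm : A.IsSymmetric := hA
  by_cases h : ∃ μ : ℂ, Module.End.HasEigenvalue A μ ∧ μ ≠ 0
  · obtain ⟨μ, hμ, hμ0⟩ := h
    obtain ⟨v, hv⟩ := hμ.exists_hasEigenvector
    have hAv : A v = μ • v := hv.apply_eq_smul
    have hv0 : v ≠ 0 := hv.right
    have hμre : (starRingEnd ℂ) μ = μ := hAsymm.conj_eigenvalue_eq_self hμ
    -- inner v (T v) = 0
    have hvTv : ⟪v, T v⟫_ℂ = 0 := by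
      have hATv : A (T v) = -(μ • T v) := by
        have h1 := hTA v
        rw [hAv, hT_smul, hμre] at h1
        rw [h1, neg_neg]
      have h2 := hA v (T v)
      rw [hAv, hATv, inner_smul_left, inner_neg_right, inner_smul_right, hμre] at h2
      have : (2 * μ) * ⟪v, T v⟫_ℂ = 0 := by ring_nf; linear_combination h2
      rcases mul_eq_zero.mp this with h3 | h3
      · exact absurd h3 (by simpa using hμ0)
      · exact h3
    refine ⟨(‖v‖ : ℂ)⁻¹ • v, μ.re, ?_, ?_, ?_⟩
    · rw [inner_smul_left, inner_smul_right, inner_self_eq_norm_sq_to_K]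
      have hn : (‖v‖ : ℂ) ≠ 0 := by simpa using norm_ne_zero_iff.mpr hv0
      field_simp
      rw [one_div, map_inv₀, Complex.conj_ofReal]; simp [pow_two, hn]
    · rw [LinearMap.map_smul, hAv, smul_comm]
      congr 1
      have := Complex.conj_eq_iff_re.mp hμre
      exact this.symm
    · rw [hT_smul, inner_smul_left, inner_smul_right, hvTv]
      ring
  · -- A = 0
    have hA0 : ∀ x, A x = 0 := by
      have h1 : (⨆ μ, Module.End.eigenspace A μ)ᗮ = ⊥ :=
        hAsymm.orthogonalComplement_iSup_eigenspaces_eq_bot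
      have h2 : (⨆ μ, Module.End.eigenspace A μ) = ⊤ :=
        Submodule.orthogonal_eq_bot_iff.mp h1
      have h3 : (⨆ μ, Module.End.eigenspace A μ) ≤ LinearMap.ker A := by
        apply iSup_le
        intro μ
        by_cases hμ : μ = 0
        · subst hμ
          intro x hx
          rw [Module.End.mem_eigenspace_iff] at hx
          simpa using hx
        · have hb : Module.End.eigenspace A μ = ⊥ := by
            by_contra hne
            exact h ⟨μ, Module.End.hasEigenvalue_iff.mpr hne, hμ⟩
          rw [hb]
          exact bot_le
      intro x
      have : x ∈ LinearMap.ker A := h3 (h2 ▸ Submodule.mem_top)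
      simpa using this
    -- helper lemmas
    have hT_neg : ∀ x : V, T (-x) = - T x := by
      intro x
      have := hT_smul (-1) x
      simpa using this
    have hT_sub : ∀ x y : V, T (x - y) = T x - T y := by
      intro x y
      rw [sub_eq_add_neg, hT_add, hT_neg, sub_eq_add_neg]
    -- produce a T-fixed nonzero vector from any nonzero vector, staying in invariant submodules
    have fixed : ∀ ψ : V, ψ ≠ 0 → ∃ x : V, x ≠ 0 ∧ T x = x ∧
        (∀ (U : Submodule ℂ V), ψ ∈ U → T ψ ∈ U → x ∈ U) := by
      intro ψ hψ
      by_cases hc : ψ + T ψ = 0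
      · have hTψ : T ψ = -ψ := by linear_combination (norm := module) hc
        refine ⟨Complex.I • (ψ - T ψ), ?_, ?_, ?_⟩
        · rw [hTψ, sub_neg_eq_add]
          intro hcon
          apply hψ
          have h2 : Complex.I • (ψ + ψ) = Complex.I • ((2:ℂ) • ψ) := by
            congr 1
            module
          rw [h2, smul_smul] at hcon
          simpa [Complex.I_ne_zero] using smul_eq_zero.mp hcon
        · rw [hT_smul, hT_sub, hT_inv, Complex.conj_I]
          module
        · intro U h1 h2
          exact U.smul_mem _ (U.sub_mem h1 h2)
      · refine ⟨ψ + T ψ, hc, ?_, ?_⟩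
        · rw [hT_add, hT_inv, add_comm]
        · intro U h1 h2
          exact U.add_mem h1 h2
    -- normalization helper
    have normz : ∀ x : V, x ≠ 0 → T x = x →
        ∃ x' : V, ⟪x', x'⟫_ℂ = 1 ∧ T x' = x' ∧ ∃ c : ℂ, c ≠ 0 ∧ x' = c • x := by
      intro x hx hTx
      refine ⟨(‖x‖ : ℂ)⁻¹ • x, ?_, ?_, (‖x‖ : ℂ)⁻¹, ?_, rfl⟩
      · rw [inner_smul_left, inner_smul_right, inner_self_eq_norm_sq_to_K]
        have hn : (‖x‖ : ℂ) ≠ 0 := by simpa using norm_ne_zero_iff.mpr hx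
        field_simp
        rw [one_div, map_inv₀, Complex.conj_ofReal]; simp [pow_two, hn]
      · rw [hT_smul, hTx]
        congr 1
        simp [map_inv₀, Complex.conj_ofReal]
      · simpa using norm_ne_zero_iff.mpr hx
    -- first fixed unit vector
    obtain ⟨ψ, hψ0⟩ := exists_ne (0 : V)
    obtain ⟨x₀, hx₀, hTx₀, -⟩ := fixed ψ hψ0
    obtain ⟨x, hx1, hTx, -⟩ := normz x₀ hx₀ hTx₀
    have hxne : x ≠ 0 := by
      intro h; rw [h] at hx1; simp at hx1
    -- orthogonal complement of x is nontrivial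
    have hWrank : 1 ≤ Module.finrank ℂ ((ℂ ∙ x)ᗮ : Submodule ℂ V) := by
      have h1 := Submodule.finrank_add_finrank_orthogonal (K := (ℂ ∙ x))
      have h2 : Module.finrank ℂ (ℂ ∙ x) = 1 := finrank_span_singleton hxne
      rw [h2] at h1
      omega
    have hWne : ∃ y : V, y ∈ ((ℂ ∙ x)ᗮ : Submodule ℂ V) ∧ y ≠ 0 := by
      by_contra hcon
      push_neg at hcon
      have hbot : ((ℂ ∙ x)ᗮ : Submodule ℂ V) = ⊥ := by
        rw [Submodule.eq_bot_iff]
        exact hcon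
      rw [hbot] at hWrank
      simp [finrank_bot] at hWrank
    obtain ⟨y, hyW, hy0⟩ := hWne
    have hTyW : T y ∈ ((ℂ ∙ x)ᗮ : Submodule ℂ V) := by
      rw [Submodule.mem_orthogonal_singleton_iff_inner_right]
      have h1 : ⟪T y, T x⟫_ℂ = ⟪x, y⟫_ℂ := hT_inner y x
      rw [hTx] at h1
      have h2 : ⟪x, y⟫_ℂ = 0 :=
        Submodule.mem_orthogonal_singleton_iff_inner_right.mp hyW
      rw [← inner_conj_symm, h1, h2, map_zero]
    obtain ⟨z₀, hz₀, hTz₀, hz₀mem⟩ := fixed y hy0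
    obtain ⟨z, hz1, hTz, c, hc0, hzc⟩ := normz z₀ hz₀ hTz₀
    have hzW : z ∈ ((ℂ ∙ x)ᗮ : Submodule ℂ V) := by
      rw [hzc]
      exact Submodule.smul_mem _ _ (hz₀mem _ hyW hTyW)
    have hxz : ⟪x, z⟫_ℂ = 0 :=
      Submodule.mem_orthogonal_singleton_iff_inner_right.mp hzW
    have hzx : ⟪z, x⟫_ℂ = 0 := by
      rw [← inner_conj_symm, hxz, map_zero]
    -- the vector φ
    set s : ℂ := ((Real.sqrt 2 : ℝ) : ℂ)⁻¹ with hs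
    have hss : s * s * 2 = 1 := by
      rw [hs, ← mul_inv]
      norm_cast
      rw [Real.mul_self_sqrt (by norm_num)]
      norm_num
    have hsconj : (starRingEnd ℂ) s = s := by
      rw [hs, map_inv₀, Complex.conj_ofReal]
    refine ⟨s • (x + Complex.I • z), 0, ?_, ?_, ?_⟩
    · rw [inner_smul_left, inner_smul_right, hsconj]
      rw [inner_add_left, inner_add_right, inner_add_right,
        inner_smul_left, inner_smul_right, inner_smul_left, inner_smul_right,
        hx1, hz1, hxz, hzx]
      rw [Complex.conj_I]
      linear_combination hss - (s*s)*Complex.I_mul_I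
    · rw [hA0]
      simp
    · have hTφ : T (s • (x + Complex.I • z)) = s • (x - Complex.I • z) := by
        rw [hT_smul, hsconj, hT_add, hT_smul, hTx, hTz, Complex.conj_I]
        module
      rw [hTφ, inner_smul_left, inner_smul_right, hsconj]
      rw [inner_sub_right, inner_add_left, inner_add_left,
        inner_smul_left, inner_smul_right, inner_smul_left, inner_smul_right,
        hx1, hz1, hxz, hzx]
      rw [Complex.conj_I]
      linear_combination (s*s)*Complex.I_mul_I


theorem key (N : ℕ) : ∀ {V : Type u} [NormedAddCommGroup V] [InnerProductSpace ℂ V]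
    [FiniteDimensional ℂ V],
    Module.finrank ℂ V = 2 * N →
    ∀ (A : V →ₗ[ℂ] V), (∀ x y : V, ⟪A x, y⟫_ℂ = ⟪x, A y⟫_ℂ) →
    ∀ (T : V → V),
    (∀ x y : V, T (x + y) = T x + T y) →
    (∀ (c : ℂ) (x : V), T (c • x) = (starRingEnd ℂ) c • T x) →
    (∀ x y : V, ⟪T x, T y⟫_ℂ = ⟪y, x⟫_ℂ) →
    (∀ x : V, T (T x) = x) →
    (∀ x : V, T (A x) = - A (T x)) →
    ∃ (φ : Fin N → V) (a : Fin N → ℝ),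
      Orthonormal ℂ (Sum.elim φ (fun i => T (φ i))) ∧
      Submodule.span ℂ (Set.range (Sum.elim φ (fun i => T (φ i)))) = ⊤ ∧
      (∀ i, A (φ i) = (a i : ℂ) • φ i) ∧
      (∀ i, A (T (φ i)) = (-(a i) : ℂ) • T (φ i)) := by
  induction N with
  | zero =>
    intro V _ _ _ hdim A hA T hT_add hT_smul hT_inner hT_inv hTA
    refine ⟨fun i => i.elim0, fun i => i.elim0, ?_, ?_, fun i => i.elim0, fun i => i.elim0⟩
    · rw [orthonormal_iff_ite]
      rintro (i|i) <;> exact i.elim0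
    · rw [Set.range_eq_empty, Submodule.span_empty]
      apply Submodule.eq_top_of_finrank_eq
      rw [finrank_bot, hdim]
  | succ N ih =>
    intro V _ _ _ hdim A hA T hT_add hT_smul hT_inner hT_inv hTA
    obtain ⟨φ₀, a₀, hφ1, hφeig, hφT⟩ :=
      exists_good (by omega) A hA T hT_add hT_smul hT_inner hT_inv hTA
    have hconjR : ∀ r : ℝ, (starRingEnd ℂ) (r : ℂ) = (r : ℂ) := fun r => Complex.conj_ofReal r
    have hTφeig : A (T φ₀) = (-(a₀ : ℂ)) • T φ₀ := by
      have h1 := hTA φ₀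
      rw [hφeig, hT_smul, hconjR] at h1
      have h2 := congrArg (fun w : V => -w) h1
      simpa [neg_smul] using h2.symm
    have hTφ1 : ⟪T φ₀, T φ₀⟫_ℂ = 1 := by rw [hT_inner, hφ1]
    have hφTsym : ⟪T φ₀, φ₀⟫_ℂ = 0 := by rw [← inner_conj_symm, hφT, map_zero]
    have hφn : ‖φ₀‖ = 1 := by rw [@norm_eq_sqrt_re_inner ℂ, hφ1]; simp
    have hTn : ‖T φ₀‖ = 1 := by rw [@norm_eq_sqrt_re_inner ℂ, hTφ1]; simp
    set f : Fin 2 → V := ![φ₀, T φ₀] with hf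
    have horthf : Orthonormal ℂ f := by
      rw [orthonormal_iff_ite]
      intro i j
      fin_cases i <;> fin_cases j <;>
        simp [hf, hφ1, hTφ1, hφT, hφTsym, hφn, hTn]
    have hK2 : Module.finrank ℂ (Submodule.span ℂ (Set.range f)) = 2 := by
      rw [finrank_span_eq_card horthf.linearIndependent]
      simp
    have hWrank : Module.finrank ℂ ((Submodule.span ℂ (Set.range f))ᗮ) = 2 * N := by
      have h1 := Submodule.finrank_add_finrank_orthogonal (K := Submodule.span ℂ (Set.range f))
      rw [hK2, hdim] at h1
      omega
    have hmemW : ∀ v : V, v ∈ (Submodule.span ℂ (Set.range f))ᗮ ↔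
        (⟪φ₀, v⟫_ℂ = 0 ∧ ⟪T φ₀, v⟫_ℂ = 0) := by
      intro v
      rw [Submodule.mem_orthogonal]
      constructor
      · intro hv
        exact ⟨hv φ₀ (Submodule.subset_span ⟨0, by simp [hf]⟩),
               hv (T φ₀) (Submodule.subset_span ⟨1, by simp [hf]⟩)⟩
      · rintro ⟨h1, h2⟩ u hu
        induction hu using Submodule.span_induction with
        | mem u hu =>
          obtain ⟨i, rfl⟩ := hu
          fin_cases i
          · simpa [hf] using h1
          · simpa [hf] using h2
        | zero => simp
        | add u w _ _ hu hw => rw [inner_add_left, hu, hw, add_zero]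
        | smul c u _ hu => rw [inner_smul_left, hu, mul_zero]
    have hAW : ∀ v ∈ (Submodule.span ℂ (Set.range f))ᗮ, A v ∈ (Submodule.span ℂ (Set.range f))ᗮ := by
      intro v hv
      rw [hmemW] at hv ⊢
      obtain ⟨h1, h2⟩ := hv
      constructor
      · rw [← hA, hφeig, inner_smul_left, h1, mul_zero]
      · rw [← hA, hTφeig, inner_smul_left, h2, mul_zero]
    have hTW : ∀ v ∈ (Submodule.span ℂ (Set.range f))ᗮ, T v ∈ (Submodule.span ℂ (Set.range f))ᗮ := by
      intro v hv
      rw [hmemW] at hv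
      obtain ⟨h1, h2⟩ := hv
      rw [hmemW]
      constructor
      · have e1 : ⟪T v, φ₀⟫_ℂ = 0 := by
          have e2 := hT_inner v (T φ₀)
          rw [hT_inv] at e2
          rw [e2]
          exact h2
        rw [← inner_conj_symm, e1, map_zero]
      · rw [hT_inner, ← inner_conj_symm, h1, map_zero]
    -- apply the induction hypothesis to the orthogonal complement
    obtain ⟨ψ, b, hons, hsp, he1, he2⟩ :=
      ih (V := ((Submodule.span ℂ (Set.range f))ᗮ : Submodule ℂ V)) hWrank
        (A.restrict hAW)
        (by
          intro x y
          simp only [Submodule.coe_inner, LinearMap.restrict_coe_apply]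
          exact hA x y)
        (fun w => ⟨T w, hTW w w.2⟩)
        (by intro x y; apply Subtype.ext; simp [hT_add])
        (by intro c x; apply Subtype.ext; simp [hT_smul])
        (by intro x y; simp only [Submodule.coe_inner]; exact hT_inner x y)
        (by intro x; apply Subtype.ext; simp [hT_inv])
        (by intro x; apply Subtype.ext; simp [LinearMap.restrict_coe_apply, hTA])
    have hψW : ∀ i, ((ψ i : V)) ∈ (Submodule.span ℂ (Set.range f))ᗮ := fun i => (ψ i).2
    have hperp : ∀ w : V, w ∈ (Submodule.span ℂ (Set.range f))ᗮ →
        ⟪φ₀, w⟫_ℂ = 0 ∧ ⟪T φ₀, w⟫_ℂ = 0 ∧ ⟪w, φ₀⟫_ℂ = 0 ∧ ⟪w, T φ₀⟫_ℂ = 0 := by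
      intro w hw
      obtain ⟨h1, h2⟩ := (hmemW w).mp hw
      exact ⟨h1, h2, by rw [← inner_conj_symm, h1, map_zero],
        by rw [← inner_conj_symm, h2, map_zero]⟩
    have hWinner := orthonormal_iff_ite.mp hons
    have hP1 : ∀ i, ⟪φ₀, (ψ i : V)⟫_ℂ = 0 := fun i => (hperp _ (hψW i)).1
    have hP2 : ∀ i, ⟪T φ₀, (ψ i : V)⟫_ℂ = 0 := fun i => (hperp _ (hψW i)).2.1
    have hP3 : ∀ i, ⟪(ψ i : V), φ₀⟫_ℂ = 0 := fun i => (hperp _ (hψW i)).2.2.1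
    have hP4 : ∀ i, ⟪(ψ i : V), T φ₀⟫_ℂ = 0 := fun i => (hperp _ (hψW i)).2.2.2
    have hQ1 : ∀ i, ⟪φ₀, T (ψ i : V)⟫_ℂ = 0 := fun i => (hperp _ (hTW _ (hψW i))).1
    have hQ2 : ∀ i, ⟪T φ₀, T (ψ i : V)⟫_ℂ = 0 := fun i => (hperp _ (hTW _ (hψW i))).2.1
    have hQ3 : ∀ i, ⟪T (ψ i : V), φ₀⟫_ℂ = 0 := fun i => (hperp _ (hTW _ (hψW i))).2.2.1
    have hQ4 : ∀ i, ⟪T (ψ i : V), T φ₀⟫_ℂ = 0 := fun i => (hperp _ (hTW _ (hψW i))).2.2.2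
    have hW1 : ∀ i j, ⟪(ψ i : V), (ψ j : V)⟫_ℂ = if i = j then 1 else 0 := by
      intro i j
      have := hWinner (Sum.inl i) (Sum.inl j)
      simpa [Submodule.coe_inner] using this
    have hW2 : ∀ i j, ⟪(ψ i : V), T (ψ j : V)⟫_ℂ = 0 := by
      intro i j
      have := hWinner (Sum.inl i) (Sum.inr j)
      simpa [Submodule.coe_inner] using this
    have hW3 : ∀ i j, ⟪T (ψ i : V), (ψ j : V)⟫_ℂ = 0 := by
      intro i j
      have := hWinner (Sum.inr i) (Sum.inl j)
      simpa [Submodule.coe_inner] using this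
    have hW4 : ∀ i j, ⟪T (ψ i : V), T (ψ j : V)⟫_ℂ = if i = j then 1 else 0 := by
      intro i j
      have := hWinner (Sum.inr i) (Sum.inr j)
      simpa [Submodule.coe_inner] using this
    have hONfull : Orthonormal ℂ (Sum.elim ((Fin.cons φ₀ fun i => (ψ i : V)) : Fin (N+1) → V)
        (fun i => T (((Fin.cons φ₀ fun i => (ψ i : V)) : Fin (N+1) → V) i))) := by
      rw [orthonormal_iff_ite]
      have hzs : ∀ j : Fin N, (0 : Fin (N+1)) ≠ j.succ := fun j => (Fin.succ_ne_zero j).symm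
      rintro (i | i) (j | j) <;>
          rcases Fin.eq_zero_or_eq_succ i with rfl | ⟨i, rfl⟩ <;>
          rcases Fin.eq_zero_or_eq_succ j with rfl | ⟨j, rfl⟩ <;>
        simp [Fin.cons_zero, Fin.cons_succ, Fin.succ_ne_zero, Fin.succ_inj,
          hzs, hφ1, hTφ1, hφT, hφTsym, hφn, hTn, hP1, hP2, hP3, hP4, hQ1, hQ2, hQ3, hQ4,
          hW1, hW2, hW3, hW4]
    refine ⟨Fin.cons φ₀ (fun i => (ψ i : V)), Fin.cons a₀ b, hONfull, ?_, ?_, ?_⟩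
    · apply Submodule.eq_top_of_finrank_eq
      rw [finrank_span_eq_card hONfull.linearIndependent, hdim]
      simp
      omega
    · intro i
      rcases Fin.eq_zero_or_eq_succ i with rfl | ⟨i, rfl⟩
      · simpa using hφeig
      · have h3 := congrArg (Subtype.val) (he1 i)
        simp only [LinearMap.restrict_coe_apply, SetLike.val_smul] at h3
        simpa [Fin.cons_succ] using h3
    · intro i
      rcases Fin.eq_zero_or_eq_succ i with rfl | ⟨i, rfl⟩
      · simpa using hTφeig
      · have h3 := congrArg (Subtype.val) (he2 i)
        simp only [LinearMap.restrict_coe_apply, SetLike.val_smul] at h3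
        simpa [Fin.cons_succ, Complex.ofReal_neg] using h3

/-- A Hermitian operator anticommuting with an antiunitary involution `T` on a
`2N`-dimensional complex Hilbert space admits an orthonormal basis
`φ₁, Tφ₁, …, φ_N, Tφ_N` with `A φᵢ = aᵢ φᵢ` and `A (Tφᵢ) = -aᵢ (Tφᵢ)`. -/
theorem stmt1 {V : Type*} [NormedAddCommGroup V] [InnerProductSpace ℂ V]
    [FiniteDimensional ℂ V] (N : ℕ) (hdim : Module.finrank ℂ V = 2 * N)
    (A : V →ₗ[ℂ] V) (hA : ∀ x y : V, ⟪A x, y⟫_ℂ = ⟪x, A y⟫_ℂ)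
    (T : V → V)
    (hT_add : ∀ x y : V, T (x + y) = T x + T y)
    (hT_smul : ∀ (c : ℂ) (x : V), T (c • x) = (starRingEnd ℂ) c • T x)
    (hT_inner : ∀ x y : V, ⟪T x, T y⟫_ℂ = ⟪y, x⟫_ℂ)
    (hT_inv : ∀ x : V, T (T x) = x)
    (hTA : ∀ x : V, T (A x) = - A (T x)) :
    ∃ (φ : Fin N → V) (a : Fin N → ℝ),
      Orthonormal ℂ (Sum.elim φ (fun i => T (φ i))) ∧
      Submodule.span ℂ (Set.range (Sum.elim φ (fun i => T (φ i)))) = ⊤ ∧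
      (∀ i, A (φ i) = (a i : ℂ) • φ i) ∧
      (∀ i, A (T (φ i)) = (-(a i) : ℂ) • T (φ i)) := by
  exact key N hdim A hA T hT_add hT_smul hT_inner hT_inv hTA
end

section
/- For the 3×3 Hermitian matrix ε = [[ε_x, ε_h, ε_s],[ε_h, ε_y, −iε_s],[ε_s, iε_s, ε_z]] with ε_x, ε_y, ε_z, ε_h, ε_s real, the 6×6 matrix H = [[ε, Δ],[Δ†, −ε]] with Δ = diag(Δ₃, −Δ₃, 0) and Δ₃ ≥ 0 real, restricted to the symmetric line where ε_x = ε_y, has det H = 0 if and only if Δ₃²·ε_z + det ε satisfies Δ₃² ε_z + det ε = 0. -/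
open Matrix

set_option maxRecDepth 40000 in
set_option maxHeartbeats 3200000 in
/-- Nodal equation along the (110) direction with spin-orbit coupling:
`det H = 0 ↔ Δ₃² ε_z + det ε = 0`. -/
theorem stmt7 (εx εy εz εh εs Δ3 : ℝ) (hxy : εx = εy) (hΔ : 0 ≤ Δ3) :
    ((Matrix.fromBlocks
        (!![(εx : ℂ), εh, εs; εh, εy, -Complex.I * εs; εs, Complex.I * εs, εz])
        (Matrix.diagonal ![(Δ3 : ℂ), -(Δ3 : ℂ), 0])
        (Matrix.diagonal ![(Δ3 : ℂ), -(Δ3 : ℂ), 0])ᴴ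
        (-(!![(εx : ℂ), εh, εs; εh, εy, -Complex.I * εs; εs, Complex.I * εs, εz]))).det = 0
      ↔ (Δ3 : ℂ) ^ 2 * (εz : ℂ) +
          (!![(εx : ℂ), εh, εs; εh, εy, -Complex.I * εs; εs, Complex.I * εs, εz]).det = 0) := by
  subst hxy
  set A : Matrix (Fin 3) (Fin 3) ℂ :=
    !![(εx : ℂ), εh, εs; εh, εx, -Complex.I * εs; εs, Complex.I * εs, εz] with hA
  set B : Matrix (Fin 3) (Fin 3) ℂ := Matrix.diagonal ![(Δ3 : ℂ), -(Δ3 : ℂ), 0] with hB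
  set H := Matrix.fromBlocks A B Bᴴ (-A) with hH
  have hre : (Matrix.reindex finSumFinEquiv finSumFinEquiv H) =
      !![(εx : ℂ), εh, εs, Δ3, 0, 0;
        εh, εx, -Complex.I * εs, 0, -(Δ3:ℂ), 0;
        εs, Complex.I * εs, εz, 0, 0, 0;
        (Δ3:ℂ), 0, 0, -εx, -εh, -εs;
        0, -(Δ3:ℂ), 0, -εh, -εx, -(-Complex.I * εs);
        0, 0, 0, -εs, -(Complex.I * εs), -εz] := by
    ext i j
    fin_cases i <;> fin_cases j <;>
      first
        | rfl
        | (simp [hH, hA, hB, Matrix.fromBlocks, finSumFinEquiv, Fin.addCases,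
            show ¬((3:Fin 6).val < 3) by decide, show ¬((4:Fin 6).val < 3) by decide,
            show ¬((5:Fin 6).val < 3) by decide, Fin.subNat, Fin.castLT,
            Matrix.conjTranspose_apply, Matrix.diagonal_apply, Fin.ext_iff,
            show ((3:Fin 6):ℕ) = 3 from rfl, show ((4:Fin 6):ℕ) = 4 from rfl,
            show ((5:Fin 6):ℕ) = 5 from rfl,
            Complex.conj_ofReal] <;> rfl)
  have hdet : H.det = -((Δ3 : ℂ) ^ 2 * (εz : ℂ) + A.det) ^ 2 := by
    have h1 : H.det = (Matrix.reindex finSumFinEquiv finSumFinEquiv H).det :=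
      (Matrix.det_reindex_self _ _).symm
    rw [h1, hre, hA, Matrix.det_fin_three]
    simp only [Matrix.det_succ_row_zero, Fin.sum_univ_succ, Matrix.submatrix_apply,
      Matrix.of_apply, Fin.succAbove_zero, Fin.zero_succAbove, Fin.succ_succAbove_zero,
      Fin.succ_succAbove_succ, Matrix.cons_val_zero, Matrix.cons_val_succ, Fin.val_zero,
      Fin.val_succ, Finset.univ_eq_empty, Finset.sum_empty, Matrix.det_fin_zero]
    norm_num [Matrix.cons_val_two, Matrix.cons_val_one, Matrix.vecHead, Matrix.vecTail]
    linear_combination (-(εs:ℂ)^4 * (Δ3:ℂ)^2 * (Complex.I^2 + 1)) * Complex.I_sq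
  rw [hdet, neg_eq_zero, pow_eq_zero_iff (two_ne_zero)]
end

section
/- Let H be a Hermitian matrix of the form H = [[ε₊, 0, 0, Δ],[0, ε₋, −Δ, 0],[0, −Δ̄, −ε₊, 0],[Δ̄, 0, 0, −ε₋]] with ε₊, ε₋ real and Δ complex. Then H has a zero eigenvalue if and only if |Δ|² + ε₊ε₋ = 0. -/
open Matrix

/-- The effective 2-pseudospin-band BdG Hamiltonian has a zero mode iff
`|Δ|² + ε₊ε₋ = 0` (the Bogoliubov Fermi surface equation). -/
theorem stmt9 (εp εm : ℝ) (Δ : ℂ) :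
    ((∃ v : Fin 4 → ℂ, v ≠ 0 ∧
        (!![(εp : ℂ), 0, 0, Δ;
            0, (εm : ℂ), -Δ, 0;
            0, -(starRingEnd ℂ) Δ, -(εp : ℂ), 0;
            (starRingEnd ℂ) Δ, 0, 0, -(εm : ℂ)] : Matrix (Fin 4) (Fin 4) ℂ).mulVec v = 0)
      ↔ Complex.normSq Δ + εp * εm = 0) := by
  rw [show (∃ v : Fin 4 → ℂ, v ≠ 0 ∧
        (!![(εp : ℂ), 0, 0, Δ;
            0, (εm : ℂ), -Δ, 0;
            0, -(starRingEnd ℂ) Δ, -(εp : ℂ), 0;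
            (starRingEnd ℂ) Δ, 0, 0, -(εm : ℂ)] : Matrix (Fin 4) (Fin 4) ℂ).mulVec v = 0)
      ↔ (!![(εp : ℂ), 0, 0, Δ;
            0, (εm : ℂ), -Δ, 0;
            0, -(starRingEnd ℂ) Δ, -(εp : ℂ), 0;
            (starRingEnd ℂ) Δ, 0, 0, -(εm : ℂ)] : Matrix (Fin 4) (Fin 4) ℂ).det = 0
      from ⟨fun ⟨v, hv, h⟩ => (Matrix.exists_mulVec_eq_zero_iff).mp ⟨v, hv, h⟩,
            fun h => Matrix.exists_mulVec_eq_zero_iff.mpr h⟩]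
  rw [show (!![(εp : ℂ), 0, 0, Δ;
            0, (εm : ℂ), -Δ, 0;
            0, -(starRingEnd ℂ) Δ, -(εp : ℂ), 0;
            (starRingEnd ℂ) Δ, 0, 0, -(εm : ℂ)] : Matrix (Fin 4) (Fin 4) ℂ).det
      = (Δ * (starRingEnd ℂ) Δ + εp * εm) ^ 2 by
    simp [Matrix.det_succ_row_zero, Fin.sum_univ_succ, Matrix.det_fin_three, Fin.castSucc, Fin.castAdd, Fin.castLE, Matrix.cons_val_succ, show Fin.succAbove (3 : Fin 4) (2 : Fin 3) = 2 from rfl]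
    ring]
  have hsq : Δ * (starRingEnd ℂ) Δ = (Complex.normSq Δ : ℂ) := Complex.mul_conj Δ
  rw [hsq, pow_eq_zero_iff (two_ne_zero)]
  rw [show ((Complex.normSq Δ : ℂ) + εp * εm) = ((Complex.normSq Δ + εp * εm : ℝ) : ℂ) by push_cast; ring]
  exact_mod_cast Iff.rfl
end

section
/- With notation as above, setting θ such that cos θ = h/r, sin θ = g/r, and U = cos(θ/2) I₄ + i sin(θ/2)·(a σ₀₂ + b σ₃₁ + c σ₂₁ + d σ₁₁)/g, the matrix U is unitary and U M U† = r σ₀₃, where M = h σ₀₃ + a σ₀₁ − b σ₃₂ − c σ₂₂ − d σ₁₂. -/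
open Matrix
open scoped Kronecker

namespace Stmt13Aux
noncomputable section

abbrev M4 := Matrix (Fin 2 × Fin 2) (Fin 2 × Fin 2) ℂ

def s1 : Matrix (Fin 2) (Fin 2) ℂ := !![0, 1; 1, 0]
def s2 : Matrix (Fin 2) (Fin 2) ℂ := !![0, -Complex.I; Complex.I, 0]
def s3 : Matrix (Fin 2) (Fin 2) ℂ := !![1, 0; 0, -1]

lemma m11 : s1 * s1 = 1 := by
  ext i j; fin_cases i <;> fin_cases j <;> simp [s1, Matrix.mul_apply, Fin.sum_univ_two]
lemma m22 : s2 * s2 = 1 := by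
  ext i j; fin_cases i <;> fin_cases j <;>
    simp [s2, Matrix.mul_apply, Fin.sum_univ_two, Complex.I_mul_I]
lemma m33 : s3 * s3 = 1 := by
  ext i j; fin_cases i <;> fin_cases j <;> simp [s3, Matrix.mul_apply, Fin.sum_univ_two]
lemma m12 : s1 * s2 = Complex.I • s3 := by
  ext i j; fin_cases i <;> fin_cases j <;> simp [s1, s2, s3, Matrix.mul_apply, Fin.sum_univ_two]
lemma m21 : s2 * s1 = (-Complex.I) • s3 := by
  ext i j; fin_cases i <;> fin_cases j <;> simp [s1, s2, s3, Matrix.mul_apply, Fin.sum_univ_two]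
lemma m23 : s2 * s3 = Complex.I • s1 := by
  ext i j; fin_cases i <;> fin_cases j <;> simp [s1, s2, s3, Matrix.mul_apply, Fin.sum_univ_two]
lemma m32 : s3 * s2 = (-Complex.I) • s1 := by
  ext i j; fin_cases i <;> fin_cases j <;> simp [s1, s2, s3, Matrix.mul_apply, Fin.sum_univ_two]
lemma m31 : s3 * s1 = Complex.I • s2 := by
  ext i j; fin_cases i <;> fin_cases j <;> simp [s1, s2, s3, Matrix.mul_apply, Fin.sum_univ_two]
lemma m13 : s1 * s3 = (-Complex.I) • s2 := by
  ext i j; fin_cases i <;> fin_cases j <;> simp [s1, s2, s3, Matrix.mul_apply, Fin.sum_univ_two]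

def Zm : M4 := (1 : Matrix (Fin 2) (Fin 2) ℂ) ⊗ₖ s3
def Am (a b c d : ℂ) : M4 :=
  a • ((1 : Matrix (Fin 2) (Fin 2) ℂ) ⊗ₖ s2) + b • (s3 ⊗ₖ s1) + c • (s2 ⊗ₖ s1) + d • (s1 ⊗ₖ s1)
def Pm (a b c d : ℂ) : M4 :=
  a • ((1 : Matrix (Fin 2) (Fin 2) ℂ) ⊗ₖ s1) - b • (s3 ⊗ₖ s2) - c • (s2 ⊗ₖ s2) - d • (s1 ⊗ₖ s2)

lemma L1 (a b c d : ℂ) : Am a b c d * Am a b c d = (a^2+b^2+c^2+d^2) • (1 : M4) := by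
  simp only [Am, add_mul, mul_add, smul_mul_assoc, mul_smul_comm,
    ← Matrix.mul_kronecker_mul, Matrix.mul_one, Matrix.one_mul,
    m11, m22, m33, m12, m21, m23, m32, m31, m13,
    Matrix.smul_kronecker, Matrix.kronecker_smul, Matrix.one_kronecker_one]
  module

lemma L2 (a b c d : ℂ) : Am a b c d * Zm = Complex.I • Pm a b c d := by
  simp only [Am, Pm, Zm, add_mul, smul_mul_assoc,
    ← Matrix.mul_kronecker_mul, Matrix.mul_one, Matrix.one_mul,
    m11, m22, m33, m12, m21, m23, m32, m31, m13,
    Matrix.smul_kronecker, Matrix.kronecker_smul, Matrix.one_kronecker_one]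
  module

lemma L3 (a b c d : ℂ) : Zm * Am a b c d = -(Complex.I • Pm a b c d) := by
  simp only [Am, Pm, Zm, mul_add, mul_smul_comm,
    ← Matrix.mul_kronecker_mul, Matrix.mul_one, Matrix.one_mul,
    m11, m22, m33, m12, m21, m23, m32, m31, m13,
    Matrix.smul_kronecker, Matrix.kronecker_smul, Matrix.one_kronecker_one]
  module

lemma kronCT (X Y : Matrix (Fin 2) (Fin 2) ℂ) : (X ⊗ₖ Y)ᴴ = Xᴴ ⊗ₖ Yᴴ := by
  ext ⟨i,j⟩ ⟨k,l⟩
  simp [Matrix.conjTranspose_apply, Matrix.kroneckerMap_apply, mul_comm]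

lemma L4 (a b c d : ℝ) : (Am (a:ℂ) b c d)ᴴ = Am (a:ℂ) b c d := by
  have e1 : s1ᴴ = s1 := by ext i j; fin_cases i <;> fin_cases j <;> simp [s1]
  have e2 : s2ᴴ = s2 := by ext i j; fin_cases i <;> fin_cases j <;> simp [s2]
  have e3 : s3ᴴ = s3 := by ext i j; fin_cases i <;> fin_cases j <;> simp [s3]
  simp [Am, Matrix.conjTranspose_add, Matrix.conjTranspose_smul, kronCT,
    e1, e2, e3, Complex.conj_ofReal]

end
end Stmt13Aux

open Stmt13Aux

/-- The unitary `U = cos(θ/2) I + i sin(θ/2) (aσ₀₂+bσ₃₁+cσ₂₁+dσ₁₁)/g` diagonalizes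
`M = hσ₀₃ + aσ₀₁ − bσ₃₂ − cσ₂₂ − dσ₁₂` into `r σ₀₃`. -/
theorem stmt13 (a b c d h : ℝ)
    (g : ℝ) (hg : g = Real.sqrt (a ^ 2 + b ^ 2 + c ^ 2 + d ^ 2)) (hgpos : 0 < g)
    (r : ℝ) (hr : r = Real.sqrt (h ^ 2 + g ^ 2))
    (θ : ℝ) (hcos : Real.cos θ = h / r) (hsin : Real.sin θ = g / r) :
    letI σ0 : Matrix (Fin 2) (Fin 2) ℂ := 1
    letI σ1 : Matrix (Fin 2) (Fin 2) ℂ := !![0, 1; 1, 0]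
    letI σ2 : Matrix (Fin 2) (Fin 2) ℂ := !![0, -Complex.I; Complex.I, 0]
    letI σ3 : Matrix (Fin 2) (Fin 2) ℂ := !![1, 0; 0, -1]
    letI M : Matrix (Fin 2 × Fin 2) (Fin 2 × Fin 2) ℂ :=
      (h : ℂ) • (σ0 ⊗ₖ σ3) + (a : ℂ) • (σ0 ⊗ₖ σ1) - (b : ℂ) • (σ3 ⊗ₖ σ2)
        - (c : ℂ) • (σ2 ⊗ₖ σ2) - (d : ℂ) • (σ1 ⊗ₖ σ2)
    letI U : Matrix (Fin 2 × Fin 2) (Fin 2 × Fin 2) ℂ :=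
      (Real.cos (θ / 2) : ℂ) • 1 +
        (Complex.I * Real.sin (θ / 2) / g) •
          ((a : ℂ) • (σ0 ⊗ₖ σ2) + (b : ℂ) • (σ3 ⊗ₖ σ1) + (c : ℂ) • (σ2 ⊗ₖ σ1)
            + (d : ℂ) • (σ1 ⊗ₖ σ1))
    U ∈ Matrix.unitaryGroup (Fin 2 × Fin 2) ℂ ∧ U * M * Uᴴ = (r : ℂ) • (σ0 ⊗ₖ σ3) := by
  -- real scalar facts
  have hsum_nonneg : (0:ℝ) ≤ a ^ 2 + b ^ 2 + c ^ 2 + d ^ 2 := by positivity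
  have hg2 : a ^ 2 + b ^ 2 + c ^ 2 + d ^ 2 = g ^ 2 := by
    rw [hg, Real.sq_sqrt hsum_nonneg]
  have hr2 : h ^ 2 + g ^ 2 = r ^ 2 := by
    rw [hr, Real.sq_sqrt (by positivity)]
  have hrpos : 0 < r := by
    rw [hr]; exact Real.sqrt_pos.mpr (by positivity)
  have hrne : r ≠ 0 := ne_of_gt hrpos
  have hgne : g ≠ 0 := ne_of_gt hgpos
  set C : ℝ := Real.cos (θ / 2) with hC
  set S : ℝ := Real.sin (θ / 2) with hS
  have hhalf : θ - θ / 2 = θ / 2 := by ring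
  have hcc : h = r * Real.cos θ := by rw [hcos]; field_simp
  have hss : g = r * Real.sin θ := by rw [hsin]; field_simp
  have idU : C ^ 2 + S ^ 2 = 1 := by rw [hC, hS]; exact Real.cos_sq_add_sin_sq _
  have id1 : h * C + g * S = r * C := by
    calc h * C + g * S = r * (Real.cos θ * C + Real.sin θ * S) := by
          rw [hcc, hss]; ring
      _ = r * Real.cos (θ - θ / 2) := by rw [Real.cos_sub]
      _ = r * C := by rw [hhalf]
  have id2 : g * C - h * S = r * S := by
    calc g * C - h * S = r * (Real.sin θ * C - Real.cos θ * S) := by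
          rw [hcc, hss]; ring
      _ = r * Real.sin (θ - θ / 2) := by rw [Real.sin_sub]
      _ = r * S := by rw [hhalf]
  -- complex versions
  have hgcC : ((a:ℂ) ^ 2 + b ^ 2 + c ^ 2 + d ^ 2) = (g:ℂ) ^ 2 := by exact_mod_cast hg2
  have hrcC : ((h:ℂ) ^ 2 + (g:ℂ) ^ 2) = (r:ℂ) ^ 2 := by exact_mod_cast hr2
  have idUC : (C:ℂ) ^ 2 + (S:ℂ) ^ 2 = 1 := by exact_mod_cast idU
  have id1C : (h:ℂ) * C + g * S = r * C := by exact_mod_cast id1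
  have id2C : (g:ℂ) * C - h * S = r * S := by exact_mod_cast id2
  have hgneC : (g:ℂ) ≠ 0 := by exact_mod_cast hgne
  have hw : True := trivial
  set w : ℂ := Complex.I * (S:ℂ) / g with hwdef
  set A : M4 := Am (a:ℂ) b c d with hA
  set P : M4 := Pm (a:ℂ) b c d with hP
  set U : M4 := (C:ℂ) • (1 : M4) + w • A with hU'
  set Mm : M4 := (h : ℂ) • Zm + (a : ℂ) • ((1 : Matrix (Fin 2) (Fin 2) ℂ) ⊗ₖ s1)
        - (b : ℂ) • (s3 ⊗ₖ s2) - (c : ℂ) • (s2 ⊗ₖ s2) - (d : ℂ) • (s1 ⊗ₖ s2) with hMm'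
  show U ∈ Matrix.unitaryGroup (Fin 2 × Fin 2) ℂ ∧ U * Mm * Uᴴ = (r : ℂ) • Zm
  have hU : U = (C:ℂ) • (1 : M4) + w • A := hU'
  have hw : w = Complex.I * (S:ℂ) / g := hwdef
  have hMM : Mm = (h:ℂ) • Zm + P := by
    rw [hMm', hP]; unfold Pm; module
  have hwconj : (starRingEnd ℂ) w = -w := by
    rw [hw]; simp [map_div₀, Complex.conj_ofReal, Complex.conj_I]; ring
  have hUH : Uᴴ = (C:ℂ) • (1 : M4) - w • A := by
    rw [hU, Matrix.conjTranspose_add, Matrix.conjTranspose_smul,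
      Matrix.conjTranspose_smul, Matrix.conjTranspose_one, hA, L4]
    simp only [Complex.star_def, Complex.conj_ofReal, hwconj, neg_smul,
      ← sub_eq_add_neg]
  have hAA : A * A = ((a:ℂ)^2+b^2+c^2+d^2) • (1 : M4) := L1 _ _ _ _
  have hAZ : A * Zm = Complex.I • P := L2 _ _ _ _
  have hZA : Zm * A = -(Complex.I • P) := L3 _ _ _ _
  have hPeq : P = (-Complex.I) • (A * Zm) := by
    rw [hAZ, smul_smul]; simp [Complex.I_mul_I]
  have hAP : A * P = (-Complex.I * ((a:ℂ)^2+b^2+c^2+d^2)) • Zm := by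
    rw [hPeq, mul_smul_comm, ← mul_assoc, hAA, smul_mul_assoc, Matrix.one_mul, smul_smul]
  -- unitarity
  have hUU : U * Uᴴ = ((C:ℂ)^2 - w^2 * ((a:ℂ)^2+b^2+c^2+d^2)) • (1 : M4) := by
    rw [hU, hUH]
    simp only [add_mul, mul_sub, smul_mul_assoc, mul_smul_comm, Matrix.mul_one,
      Matrix.one_mul, hAA]
    module
  have hscal : ((C:ℂ)^2 - w^2 * ((a:ℂ)^2+b^2+c^2+d^2)) = 1 := by
    rw [hgcC, hw]
    field_simp
    linear_combination idUC - (S:ℂ)^2 * Complex.I_sq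
  have hUU1 : U * Uᴴ = 1 := by rw [hUU, hscal, one_smul]
  have hunit : U ∈ Matrix.unitaryGroup (Fin 2 × Fin 2) ℂ := by
    rw [Matrix.mem_unitaryGroup_iff, Matrix.star_eq_conjTranspose]
    exact hUU1
  refine ⟨hunit, ?_⟩
  have lhs : U * Mm = ((C:ℂ) * h - w * Complex.I * ((a:ℂ)^2+b^2+c^2+d^2)) • Zm
      + ((C:ℂ) + w * h * Complex.I) • P := by
    rw [hU, hMM]
    simp only [add_mul, mul_add, smul_mul_assoc, mul_smul_comm, Matrix.mul_one,
      Matrix.one_mul, hAZ, hAP]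
    module
  have rhs : ((r:ℂ) • Zm) * U = ((r:ℂ) * C) • Zm + (-((r:ℂ) * w * Complex.I)) • P := by
    rw [hU]
    simp only [mul_add, smul_mul_assoc, mul_smul_comm, Matrix.mul_one, hZA]
    module
  have e1 : ((C:ℂ) * h - w * Complex.I * ((a:ℂ)^2+b^2+c^2+d^2)) = (r:ℂ) * C := by
    rw [hgcC, hw]
    field_simp
    linear_combination id1C - (S:ℂ) * (g:ℂ) * Complex.I_sq
  have e2 : ((C:ℂ) + w * h * Complex.I) = -((r:ℂ) * w * Complex.I) := by
    rw [hw]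
    field_simp
    linear_combination id2C + ((h:ℂ) + (r:ℂ)) * (S:ℂ) * Complex.I_sq
  have hUM : U * Mm = ((r:ℂ) • Zm) * U := by rw [lhs, rhs, e1, e2]
  calc U * Mm * Uᴴ = ((r:ℂ) • Zm) * U * Uᴴ := by rw [hUM]
    _ = ((r:ℂ) • Zm) * (U * Uᴴ) := by rw [mul_assoc]
    _ = (r:ℂ) • Zm := by rw [hUU1, mul_one]
end

section
/- (Weyl's inequality for a perturbation) Let A and B be Hermitian operators on an N-dimensional complex Hilbert space, and let E¹(·) ≤ ... ≤ Eᴺ(·) denote eigenvalues in nondecreasing order with multiplicity. Then |Eⁿ(A+B) − Eⁿ(A)| ≤ ‖B‖ for every n = 1, ..., N, where ‖B‖ is the operator norm. -/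
open Matrix Polynomial Finset

noncomputable section WeylAux

/-- From a permutation of lists of tuples, extract a permutation of indices. -/
lemma weyl_exists_comp_perm {α : Type*} : ∀ {n : ℕ} {f g : Fin n → α},
    List.Perm (List.ofFn f) (List.ofFn g) → ∃ σ : Equiv.Perm (Fin n), f = g ∘ σ := by
  intro n
  induction n with
  | zero => exact fun _ => ⟨1, funext fun i => i.elim0⟩
  | succ n ih =>
    intro f g h
    have h0 : f 0 ∈ List.ofFn g := h.mem_iff.mp (by
      rw [List.mem_ofFn]; exact ⟨0, rfl⟩)
    rw [List.mem_ofFn] at h0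
    obtain ⟨j, hj⟩ := h0
    set g' : Fin (n + 1) → α := g ∘ Equiv.swap 0 j with hg'def
    have hg' : List.Perm (List.ofFn g') (List.ofFn g) := Equiv.Perm.ofFn_comp_perm _ g
    have h2 : List.Perm (List.ofFn f) (List.ofFn g') := h.trans hg'.symm
    rw [List.ofFn_succ, List.ofFn_succ] at h2
    have hfg0 : g' 0 = f 0 := by simp [hg'def, Equiv.swap_apply_left, hj]
    rw [hfg0] at h2
    have h3 := (List.perm_cons (f 0)).mp h2
    obtain ⟨τ, hτ⟩ := ih h3
    refine ⟨(Equiv.Perm.decomposeFin.symm (0, τ)).trans (Equiv.swap 0 j), ?_⟩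
    funext i
    induction i using Fin.cases with
    | zero => simp [Equiv.Perm.decomposeFin_symm_apply_zero, Equiv.swap_apply_left, hj]
    | succ k =>
      have := congrFun hτ k
      simp only [Function.comp_apply] at this ⊢
      simp [Equiv.Perm.decomposeFin_symm_apply_succ, this, hg'def]

lemma weyl_charpoly_conj_units {n : Type*} [Fintype n] [DecidableEq n] (U D V : Matrix n n ℂ)
    (hUV : U * V = 1) : (U * D * V).charpoly = D.charpoly := by
  let φ : Matrix n n ℂ →+* Matrix n n ℂ[X] := (C : ℂ →+* ℂ[X]).mapMatrix
  have hscal : ∀ M : Matrix n n ℂ[X], M * scalar n (X : ℂ[X]) = scalar n (X : ℂ[X]) * M :=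
    fun M => (Matrix.scalar_commute (X : ℂ[X]) (fun r => Commute.all _ _) M).symm
  have hφUV : φ U * φ V = 1 := by rw [← map_mul φ, hUV, _root_.map_one]
  have hcm : charmatrix (U * D * V) = φ U * charmatrix D * φ V := by
    rw [charmatrix, charmatrix, mul_sub, sub_mul]
    congr 1
    · rw [show (φ U) * scalar n (X : ℂ[X]) = scalar n (X : ℂ[X]) * φ U from hscal (φ U),
        mul_assoc, hφUV, mul_one]
    · show φ (U * D * V) = φ U * φ D * φ V
      rw [map_mul φ, map_mul φ]
  rw [Matrix.charpoly, hcm, det_mul, det_mul, Matrix.charpoly]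
  have h1 : det (φ U) * det (φ V) = 1 := by rw [← det_mul, hφUV, det_one]
  calc det (φ U) * det (charmatrix D) * det (φ V)
      = det (charmatrix D) * (det (φ U) * det (φ V)) := by ring
    _ = det (charmatrix D) := by rw [h1, mul_one]

lemma weyl_charpoly_diagonal {n : ℕ} (d : Fin n → ℂ) :
    (diagonal d).charpoly = ∏ i, (X - C (d i)) := by
  rw [Matrix.charpoly_of_upperTriangular _ (Matrix.blockTriangular_diagonal d)]
  simp

lemma weyl_charpoly_hermitian {n : ℕ} (M : Matrix (Fin n) (Fin n) ℂ) (hM : M.IsHermitian) :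
    M.charpoly = ∏ i, (X - C ((hM.eigenvalues i : ℂ))) := by
  have hU := (Matrix.mem_unitaryGroup_iff).mp (hM.eigenvectorUnitary).2
  conv_lhs => rw [hM.spectral_theorem]; simp only [Unitary.conjStarAlgAut_apply, Unitary.coe_star]
  rw [weyl_charpoly_conj_units _ _ _ hU, weyl_charpoly_diagonal]
  rfl

lemma weyl_prod_X_sub_C_inj {n : ℕ} (f g : Fin n → ℂ)
    (h : ∏ i, (X - C (f i)) = ∏ i, (X - C (g i))) :
    ∃ σ : Equiv.Perm (Fin n), f = g ∘ σ := by
  have key : ∀ (f : Fin n → ℂ), (∏ i, (X - C (f i))).roots = (List.ofFn f : Multiset ℂ) := by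
    intro f
    rw [Finset.prod_eq_multiset_prod,
      show (fun i => X - C (f i)) = (fun a : ℂ => X - C a) ∘ f from rfl, ← Multiset.map_map,
      Polynomial.roots_multiset_prod_X_sub_C, Fin.univ_val_map]
  have h2 : (List.ofFn f : Multiset ℂ) = (List.ofFn g : Multiset ℂ) := by
    rw [← key f, ← key g, h]
  exact weyl_exists_comp_perm (Multiset.coe_eq_coe.mp h2)

lemma weyl_toEuclideanCLM_eigenvectorBasis {n : ℕ} (M : Matrix (Fin n) (Fin n) ℂ)
    (hM : M.IsHermitian) (k : Fin n) :
    Matrix.toEuclideanCLM (𝕜 := ℂ) M (hM.eigenvectorBasis k)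
      = (hM.eigenvalues k : ℂ) • hM.eigenvectorBasis k := by
  have h1 := hM.mulVec_eigenvectorBasis k
  have h2 := Matrix.toEuclideanCLM_toLp (𝕜 := ℂ) M (hM.eigenvectorBasis k).ofLp
  rw [WithLp.toLp_ofLp, h1] at h2
  rw [h2]
  ext j
  simp [Complex.real_smul]

lemma weyl_exists_eigenbasis {n : ℕ} (M : Matrix (Fin n) (Fin n) ℂ) (hM : M.IsHermitian)
    (a : Fin n → ℝ) (hca : M.charpoly = ∏ i, (X - C ((a i : ℂ)))) :
    ∃ u : OrthonormalBasis (Fin n) ℂ (EuclideanSpace ℂ (Fin n)),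
      ∀ j, Matrix.toEuclideanCLM (𝕜 := ℂ) M (u j) = (a j : ℂ) • u j := by
  have h1 : ∏ i, (X - C ((a i : ℂ))) = ∏ i, (X - C ((hM.eigenvalues i : ℂ))) := by
    rw [← hca, weyl_charpoly_hermitian M hM]
  obtain ⟨σ, hσ⟩ := weyl_prod_X_sub_C_inj _ _ h1
  refine ⟨hM.eigenvectorBasis.reindex σ.symm, fun j => ?_⟩
  have hval : ((a j : ℂ)) = ((hM.eigenvalues (σ j) : ℂ)) := congrFun hσ j
  rw [OrthonormalBasis.reindex_apply, Equiv.symm_symm,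
    weyl_toEuclideanCLM_eigenvectorBasis, hval]

variable {n : ℕ}

lemma weyl_repr_eq_zero_of_mem_span (u : OrthonormalBasis (Fin n) ℂ (EuclideanSpace ℂ (Fin n)))
    (s : Set (Fin n)) {x : EuclideanSpace ℂ (Fin n)}
    (hx : x ∈ Submodule.span ℂ (u '' s)) {j : Fin n} (hj : j ∉ s) :
    u.repr x j = 0 := by
  rw [u.repr_apply_apply]
  induction hx using Submodule.span_induction with
  | mem y hy =>
    obtain ⟨k, hk, rfl⟩ := hy
    exact u.orthonormal.2 (fun h : j = k => hj (h ▸ hk))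
  | zero => exact inner_zero_right _
  | add y z _ _ hy hz => rw [inner_add_right, hy, hz, add_zero]
  | smul c y _ hy => rw [inner_smul_right, hy, mul_zero]

lemma weyl_re_inner_eq_sum (u : OrthonormalBasis (Fin n) ℂ (EuclideanSpace ℂ (Fin n)))
    (T : EuclideanSpace ℂ (Fin n) →L[ℂ] EuclideanSpace ℂ (Fin n)) (μ : Fin n → ℝ)
    (hT : ∀ j, T (u j) = (μ j : ℂ) • u j) (x : EuclideanSpace ℂ (Fin n)) :
    (inner ℂ x (T x) : ℂ).re = ∑ j, μ j * ‖u.repr x j‖ ^ 2 := by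
  have hx : T x = ∑ j, (u.repr x j * (μ j : ℂ)) • u j := by
    conv_lhs => rw [← u.sum_repr x]
    rw [map_sum]
    exact Finset.sum_congr rfl fun j _ => by rw [T.map_smul, hT j, smul_smul]
  rw [hx, inner_sum]
  simp_rw [inner_smul_right]
  rw [Complex.re_sum]
  refine Finset.sum_congr rfl fun j _ => ?_
  rw [← inner_conj_symm, ← u.repr_apply_apply]
  have : u.repr x j * (μ j : ℂ) * (starRingEnd ℂ) (u.repr x j)
      = ((μ j : ℂ)) * (u.repr x j * (starRingEnd ℂ) (u.repr x j)) := by ring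
  rw [this, Complex.mul_conj, ← Complex.ofReal_mul, Complex.ofReal_re,
    Complex.normSq_eq_norm_sq]

lemma weyl_norm_sq_eq_sum_repr (u : OrthonormalBasis (Fin n) ℂ (EuclideanSpace ℂ (Fin n)))
    (x : EuclideanSpace ℂ (Fin n)) : ‖x‖ ^ 2 = ∑ j, ‖u.repr x j‖ ^ 2 := by
  rw [← u.repr.norm_map x, EuclideanSpace.norm_eq, Real.sq_sqrt (by positivity)]

lemma weyl_finrank_span_orthonormal (u : OrthonormalBasis (Fin n) ℂ (EuclideanSpace ℂ (Fin n)))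
    (s : Set (Fin n)) [Fintype s] :
    Module.finrank ℂ (Submodule.span ℂ (u '' s)) = Fintype.card s := by
  have li := (u.orthonormal.comp ((↑) : s → Fin n) Subtype.val_injective).linearIndependent
  have := finrank_span_eq_card li
  rwa [Set.range_comp, Subtype.range_coe] at this

lemma weyl_quad_le_on_span (u : OrthonormalBasis (Fin n) ℂ (EuclideanSpace ℂ (Fin n)))
    (T : EuclideanSpace ℂ (Fin n) →L[ℂ] EuclideanSpace ℂ (Fin n)) (μ : Fin n → ℝ)
    (hμ : Monotone μ) (hT : ∀ j, T (u j) = (μ j : ℂ) • u j) (i : Fin n)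
    {x : EuclideanSpace ℂ (Fin n)} (hx : x ∈ Submodule.span ℂ (u '' Set.Iic i)) :
    (inner ℂ x (T x) : ℂ).re ≤ μ i * ‖x‖ ^ 2 := by
  rw [weyl_re_inner_eq_sum u T μ hT x, weyl_norm_sq_eq_sum_repr u x, Finset.mul_sum]
  refine Finset.sum_le_sum fun j _ => ?_
  by_cases hj : j ≤ i
  · exact mul_le_mul_of_nonneg_right (hμ hj) (by positivity)
  · rw [weyl_repr_eq_zero_of_mem_span u _ hx (by simpa using hj)]
    simp

lemma weyl_quad_ge_on_span (u : OrthonormalBasis (Fin n) ℂ (EuclideanSpace ℂ (Fin n)))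
    (T : EuclideanSpace ℂ (Fin n) →L[ℂ] EuclideanSpace ℂ (Fin n)) (μ : Fin n → ℝ)
    (hμ : Monotone μ) (hT : ∀ j, T (u j) = (μ j : ℂ) • u j) (i : Fin n)
    {x : EuclideanSpace ℂ (Fin n)} (hx : x ∈ Submodule.span ℂ (u '' Set.Ici i)) :
    μ i * ‖x‖ ^ 2 ≤ (inner ℂ x (T x) : ℂ).re := by
  rw [weyl_re_inner_eq_sum u T μ hT x, weyl_norm_sq_eq_sum_repr u x, Finset.mul_sum]
  refine Finset.sum_le_sum fun j _ => ?_
  by_cases hj : i ≤ j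
  · exact mul_le_mul_of_nonneg_right (hμ hj) (by positivity)
  · rw [weyl_repr_eq_zero_of_mem_span u _ hx (by simpa using hj)]
    simp

lemma weyl_one_sided {n : ℕ} (M P : Matrix (Fin n) (Fin n) ℂ) (hM : M.IsHermitian)
    (hMP : (M + P).IsHermitian) (a b : Fin n → ℝ) (ha : Monotone a) (hb : Monotone b)
    (hca : M.charpoly = ∏ i, (X - C ((a i : ℂ))))
    (hcb : (M + P).charpoly = ∏ i, (X - C ((b i : ℂ)))) (i : Fin n) :
    b i ≤ a i + ‖Matrix.toEuclideanCLM (𝕜 := ℂ) P‖ := by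
  obtain ⟨u, hu⟩ := weyl_exists_eigenbasis M hM a hca
  obtain ⟨w, hw⟩ := weyl_exists_eigenbasis (M + P) hMP b hcb
  set V := Submodule.span ℂ (u '' Set.Iic i) with hVdef
  set W := Submodule.span ℂ (w '' Set.Ici i) with hWdef
  have hVr : Module.finrank ℂ V = (i : ℕ) + 1 := by
    rw [hVdef, weyl_finrank_span_orthonormal, Fintype.card_Iic, Fin.card_Iic]
  have hWr : Module.finrank ℂ W = n - (i : ℕ) := by
    rw [hWdef, weyl_finrank_span_orthonormal, Fintype.card_Ici, Fin.card_Ici]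
  have hsum := Submodule.finrank_sup_add_finrank_inf_eq V W
  have hle : Module.finrank ℂ ↥(V ⊔ W) ≤ n :=
    (Submodule.finrank_le _).trans_eq finrank_euclideanSpace_fin
  have hpos : 0 < Module.finrank ℂ ↥(V ⊓ W) := by
    have := i.isLt
    omega
  obtain ⟨x, hx0⟩ := Module.finrank_pos_iff_exists_ne_zero.mp hpos
  have hy0 : (x : EuclideanSpace ℂ (Fin n)) ≠ 0 := fun h => hx0 (Subtype.ext h)
  set y : EuclideanSpace ℂ (Fin n) := (x : EuclideanSpace ℂ (Fin n)) with hydef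
  have hyV : y ∈ V := x.2.1
  have hyW : y ∈ W := x.2.2
  set TM := Matrix.toEuclideanCLM (𝕜 := ℂ) M with hTM
  set TP := Matrix.toEuclideanCLM (𝕜 := ℂ) P with hTP
  have hMPdecomp : Matrix.toEuclideanCLM (𝕜 := ℂ) (M + P) = TM + TP := by
    rw [hTM, hTP, map_add]
  have h1 : b i * ‖y‖ ^ 2 ≤ (inner ℂ y (Matrix.toEuclideanCLM (𝕜 := ℂ) (M + P) y) : ℂ).re :=
    weyl_quad_ge_on_span w _ b hb hw i hyW
  have h2 : (inner ℂ y (TM y) : ℂ).re ≤ a i * ‖y‖ ^ 2 :=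
    weyl_quad_le_on_span u _ a ha hu i hyV
  have h4 : (inner ℂ y (TP y) : ℂ).re ≤ ‖TP‖ * ‖y‖ ^ 2 := by
    calc (inner ℂ y (TP y) : ℂ).re ≤ ‖(inner ℂ y (TP y) : ℂ)‖ := Complex.re_le_norm _
      _ ≤ ‖y‖ * ‖TP y‖ := norm_inner_le_norm _ _
      _ ≤ ‖y‖ * (‖TP‖ * ‖y‖) := mul_le_mul_of_nonneg_left (TP.le_opNorm y) (norm_nonneg y)
      _ = ‖TP‖ * ‖y‖ ^ 2 := by ring
  have hsplit : (inner ℂ y (Matrix.toEuclideanCLM (𝕜 := ℂ) (M + P) y) : ℂ).re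
      = (inner ℂ y (TM y) : ℂ).re + (inner ℂ y (TP y) : ℂ).re := by
    rw [hMPdecomp, ContinuousLinearMap.add_apply, inner_add_right, Complex.add_re]
  have hchain : b i * ‖y‖ ^ 2 ≤ (a i + ‖TP‖) * ‖y‖ ^ 2 := by
    calc b i * ‖y‖ ^ 2 ≤ (inner ℂ y (TM y) : ℂ).re + (inner ℂ y (TP y) : ℂ).re := by
          rw [← hsplit]; exact h1
      _ ≤ a i * ‖y‖ ^ 2 + ‖TP‖ * ‖y‖ ^ 2 := add_le_add h2 h4
      _ = (a i + ‖TP‖) * ‖y‖ ^ 2 := by ring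
  have hnormpos : (0 : ℝ) < ‖y‖ ^ 2 := pow_pos (norm_pos_iff.mpr hy0) 2
  exact le_of_mul_le_mul_right hchain hnormpos

end WeylAux

/-- Weyl's inequality: the `n`-th eigenvalues (in nondecreasing order, with multiplicity) of the
Hermitian matrices `A` and `A + B` differ by at most the operator norm of `B`. -/
theorem stmt15 {N : ℕ} (A B : Matrix (Fin N) (Fin N) ℂ)
    (hA : A.IsHermitian) (hB : B.IsHermitian)
    (a b : Fin N → ℝ) (ha_mono : Monotone a) (hb_mono : Monotone b)
    (hca : A.charpoly = ∏ i : Fin N, (X - C ((a i : ℂ))))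
    (hcb : (A + B).charpoly = ∏ i : Fin N, (X - C ((b i : ℂ)))) :
    ∀ i : Fin N, |b i - a i| ≤ ‖Matrix.toEuclideanCLM (𝕜 := ℂ) B‖ := by
  intro i
  have hAB : (A + B).IsHermitian := hA.add hB
  rw [abs_sub_le_iff]
  constructor
  · have := weyl_one_sided A B hA hAB a b ha_mono hb_mono hca hcb i
    linarith
  · have hAeq : (A + B) + (-B) = A := by abel
    have hA' : ((A + B) + (-B)).IsHermitian := by rw [hAeq]; exact hA
    have hca' : ((A + B) + (-B)).charpoly = ∏ j : Fin N, (X - C ((a j : ℂ))) := by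
      rw [hAeq]; exact hca
    have := weyl_one_sided (A + B) (-B) hAB hA' b a hb_mono ha_mono hcb hca' i
    have hnorm : ‖Matrix.toEuclideanCLM (𝕜 := ℂ) (-B)‖ = ‖Matrix.toEuclideanCLM (𝕜 := ℂ) B‖ := by
      rw [map_neg, norm_neg]
    linarith [hnorm ▸ this]
end
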